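/- arXiv:2205.01214 — 4 statements merged into one kernel-verified Lean document; each statement's English description precedes it below -/
import Mathlib

section
/- For any countable type X, there exists a function f : X → ℝ such that the map sending a finite multiset M of X to ∑_{x ∈ M} f(x) is injective on Multiset X. -/
open Polynomial

private noncomputable def Ppoly (M : Multiset ℕ) : ℤ[X] :=
  (M.map fun n => (X : ℤ[X]) ^ n).sum

private lemma Ppoly_coeff (M : Multiset ℕ) (k : ℕ) :
    (Ppoly M).coeff k = (M.count k : ℤ) := by
  induction M using Multiset.induction with
  | empty => simp [Ppoly]
  | cons a M ih =>
    simp only [Ppoly, Multiset.map_cons, Multiset.sum_cons, coeff_add, coeff_X_pow,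
      Multiset.count_cons] at *
    rw [ih]
    by_cases h : a = k <;> simp [h, eq_comm, add_comm]

theorem stmt3 {X : Type*} [Countable X] :
    ∃ f : X → ℝ, Function.Injective (fun M : Multiset X => (M.map f).sum) := by
  obtain ⟨e, he⟩ := Countable.exists_injective_nat X
  set t : ℝ := liouvilleNumber 3
  have ht : Transcendental ℤ t :=
    (liouville_liouvilleNumber (by norm_num)).transcendental
  refine ⟨fun x => t ^ e x, fun M N h => ?_⟩
  simp only at h
  have key : Ppoly (M.map e) = Ppoly (N.map e) := by
    have haeval : ∀ (K : Multiset X),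
        Polynomial.aeval t (Ppoly (K.map e)) = (K.map fun x => t ^ e x).sum := by
      intro K
      induction K using Multiset.induction with
      | empty => simp [Ppoly]
      | cons a K ih => simp [Ppoly, Multiset.sum_cons] at *; simp [ih]
    have : Polynomial.aeval t (Ppoly (M.map e) - Ppoly (N.map e)) = 0 := by
      rw [map_sub, haeval, haeval, h, sub_self]
    have := sub_eq_zero.mp (by
      by_contra hne
      exact ht ⟨_, hne, this⟩)
    exact this
  have hmap : M.map e = N.map e := by
    ext k
    have := congrArg (fun p => p.coeff k) key
    simpa [Ppoly_coeff] using this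
  exact Multiset.map_injective he hmap
end

section
/- For any countable type X and any arbitrary type Y, every function g : Multiset X → Y can be written as g = φ ∘ h, where h(M) = ∑_{x ∈ M} f(x) for some f : X → ℝ and some function φ : ℝ → Y, provided Y is nonempty or Multiset X maps into it appropriately (i.e., there exist f and φ with g(M) = φ(h(M)) for all M). -/
open Polynomial in
lemma li_pow_trans {t : ℝ} (ht : Transcendental ℤ t) :
    LinearIndependent ℤ (fun n : ℕ => t ^ n) := by
  rw [linearIndependent_iff']
  intro s g hg i hi
  have hp : (Polynomial.aeval t) (∑ j ∈ s, Polynomial.monomial j (g j)) = 0 := by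
    rw [map_sum]
    simpa [Polynomial.aeval_monomial, zsmul_eq_mul] using hg
  have hz := transcendental_iff.mp ht _ hp
  have := congrArg (fun p => Polynomial.coeff p i) hz
  simpa [Polynomial.finset_sum_coeff, Polynomial.coeff_monomial,
    Finset.sum_ite_eq' s i g, hi] using this

lemma sum_pow_inj {t : ℝ} (li : LinearIndependent ℚ (fun n : ℕ => t ^ n)) :
    Function.Injective (fun A : Multiset ℕ => (A.map (t ^ ·)).sum) := by
  intro A B hAB
  simp only at hAB
  have hsum : ∀ C : Multiset ℕ, C.toFinset ⊆ A.toFinset ∪ B.toFinset →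
      (C.map (t ^ ·)).sum = ∑ m ∈ A.toFinset ∪ B.toFinset, (C.count m : ℚ) • t ^ m := by
    intro C hC
    rw [Finset.sum_multiset_map_count]
    rw [Finset.sum_subset hC]
    · apply Finset.sum_congr rfl
      intro m _
      simp [Rat.smul_def]
    · intro m _ hm
      simp [Multiset.count_eq_zero_of_notMem (by simpa using hm)]
  have h0 : ∑ m ∈ A.toFinset ∪ B.toFinset,
      ((A.count m : ℚ) - (B.count m : ℚ)) • t ^ m = 0 := by
    have hA := hsum A Finset.subset_union_left
    have hB := hsum B Finset.subset_union_right
    simp only [sub_smul, Finset.sum_sub_distrib]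
    rw [← hA, ← hB, hAB, sub_self]
  have key := linearIndependent_iff'.mp li (A.toFinset ∪ B.toFinset) _ h0
  ext n
  by_cases hn : n ∈ A.toFinset ∪ B.toFinset
  · have := key n hn
    have : (A.count n : ℚ) = (B.count n : ℚ) := by linarith [sub_eq_zero.mp this]
    exact_mod_cast this
  · simp only [Finset.mem_union, Multiset.mem_toFinset, not_or] at hn
    rw [Multiset.count_eq_zero_of_notMem hn.1, Multiset.count_eq_zero_of_notMem hn.2]

theorem stmt6 {X Y : Type*} [Countable X] (g : Multiset X → Y) :
    ∃ (f : X → ℝ) (φ : ℝ → Y), ∀ M : Multiset X, g M = φ ((M.map f).sum) := by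
  obtain ⟨k, hk⟩ := Countable.exists_injective_nat X
  have ht : Transcendental ℤ (liouvilleNumber 2) := transcendental_liouvilleNumber le_rfl
  have liZ := li_pow_trans ht
  have li : LinearIndependent ℚ (fun n : ℕ => (liouvilleNumber 2) ^ n) :=
    liZ.localization ℚ (nonZeroDivisors ℤ)
  set t := liouvilleNumber 2
  set f : X → ℝ := fun x => t ^ (k x) with hf
  set h : Multiset X → ℝ := fun M => (M.map f).sum with hh
  have hinj : Function.Injective h := by
    intro M N hMN
    have : ((M.map k).map (t ^ ·)).sum = ((N.map k).map (t ^ ·)).sum := by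
      simpa [Multiset.map_map, Function.comp] using hMN
    have := sum_pow_inj li this
    exact Multiset.map_injective hk this
  refine ⟨f, fun r => g (Function.invFun h r), fun M => ?_⟩
  exact (congrArg g (Function.leftInverse_invFun hinj M)).symm
end

section
/- Let β : X → ℕ be injective with β(x) prime for all x, f(x) = log(β(x)), and let ε be a real number not expressible as log a / log b for any positive rationals a, b with b ≠ 1. Then the function (c, M) ↦ ε·f(c) + ∑_{x ∈ M} f(x) is injective on X × Multiset X. -/
theorem stmt9 {X : Type*} [Countable X] (β : X → ℕ) (hβ : Function.Injective β)
    (hp : ∀ x, (β x).Prime) (f : X → ℝ) (hf : ∀ x, f x = Real.log (β x)) (ε : ℝ)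
    (hε : ∀ a b : ℚ, 0 < a → 0 < b → b ≠ 1 → ε ≠ Real.log a / Real.log b) :
    Function.Injective (fun cM : X × Multiset X => ε * f cM.1 + ((cM.2.map f).sum)) := by
  have hβpos : ∀ x, 0 < (β x : ℝ) := fun x => by exact_mod_cast (hp x).pos
  -- product positivity
  have hprodpos : ∀ M : Multiset X, 0 < ((M.map β).prod : ℕ) := by
    intro M
    apply Multiset.prod_pos
    intro a ha
    obtain ⟨x, _, rfl⟩ := Multiset.mem_map.mp ha
    exact (hp x).pos
  -- sum of logs is log of product
  have key : ∀ M : Multiset X, (M.map f).sum = Real.log ((M.map β).prod : ℕ) := by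
    intro M
    induction M using Multiset.induction_on with
    | empty => simp
    | cons a s ih =>
      simp only [Multiset.map_cons, Multiset.sum_cons, Multiset.prod_cons]
      rw [ih, hf a, Nat.cast_mul, Real.log_mul (ne_of_gt (hβpos a))
        (ne_of_gt (by exact_mod_cast hprodpos s))]
  rintro ⟨c1, M1⟩ ⟨c2, M2⟩ h
  simp only at h
  rw [key M1, key M2] at h
  set P1 : ℕ := (M1.map β).prod with hP1
  set P2 : ℕ := (M2.map β).prod with hP2
  have hP1pos := hprodpos M1
  have hP2pos := hprodpos M2
  have hc : c1 = c2 := by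
    by_contra hne
    have hβne : β c1 ≠ β c2 := fun e => hne (hβ e)
    set a : ℚ := (P2 : ℚ) / (P1 : ℚ) with ha
    set b : ℚ := (β c1 : ℚ) / (β c2 : ℚ) with hb
    have hapos : 0 < a := div_pos (by exact_mod_cast hP2pos) (by exact_mod_cast hP1pos)
    have hbpos : 0 < b := div_pos (by exact_mod_cast (hp c1).pos) (by exact_mod_cast (hp c2).pos)
    have hbone : b ≠ 1 := by
      intro e
      apply hβne
      rw [hb, div_eq_one_iff_eq (by exact_mod_cast (hp c2).pos.ne' : ((β c2 : ℚ)) ≠ 0)] at e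
      exact_mod_cast e
    have hloga : Real.log a = Real.log P2 - Real.log P1 := by
      rw [ha]
      push_cast
      rw [Real.log_div (by exact_mod_cast hP2pos.ne') (by exact_mod_cast hP1pos.ne')]
    have hlogb : Real.log b = Real.log (β c1) - Real.log (β c2) := by
      rw [hb]
      push_cast
      rw [Real.log_div (ne_of_gt (hβpos c1)) (ne_of_gt (hβpos c2))]
    have hlogbne : Real.log b ≠ 0 := by
      rw [hlogb, sub_ne_zero]
      intro e
      apply hβne
      have := Real.log_injOn_pos (Set.mem_Ioi.mpr (hβpos c1)) (Set.mem_Ioi.mpr (hβpos c2)) e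
      exact_mod_cast this
    apply hε a b hapos hbpos hbone
    rw [hf, hf] at h
    rw [eq_div_iff hlogbne, hlogb, hloga]
    ring_nf
    ring_nf at h
    linarith
  subst hc
  have hPeq : P1 = P2 := by
    rw [hf] at h  -- no-op? h : ε * f c1 + log P1 = ε * f c1 + log P2
    have hlog : Real.log P1 = Real.log P2 := by linarith
    have := Real.log_injOn_pos (Set.mem_Ioi.mpr (by exact_mod_cast hP1pos : (0:ℝ) < P1))
      (Set.mem_Ioi.mpr (by exact_mod_cast hP2pos : (0:ℝ) < P2)) hlog
    exact_mod_cast this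
  have hMeq : M1.map β = M2.map β := by
    have h1 : ∀ p ∈ M1.map β, Irreducible p := by
      intro p hpmem
      obtain ⟨x, _, rfl⟩ := Multiset.mem_map.mp hpmem
      exact (hp x).prime.irreducible
    have h2 : ∀ p ∈ M2.map β, Irreducible p := by
      intro p hpmem
      obtain ⟨x, _, rfl⟩ := Multiset.mem_map.mp hpmem
      exact (hp x).prime.irreducible
    have hrel := UniqueFactorizationMonoid.factors_unique h1 h2
      (show Associated P1 P2 from hPeq ▸ Associated.refl P1)
    exact Multiset.rel_eq.mp (hrel.mono fun a _ b _ h' => associated_iff_eq.mp h')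
  have := Multiset.map_injective hβ hMeq
  simp [this]
end

section
/- There exists a function f : X → ℝ (X countable) and a set Z ⊆ ℝ of Lebesgue measure zero such that for every real ε ∉ Z, the map (c, M) ↦ ε·f(c) + ∑_{x ∈ M} f(x) is injective on X × Multiset X. -/
open Polynomial

private lemma Qsum_coeff (S : Multiset ℕ) (k : ℕ) :
    ((S.map (fun n => (X : ℤ[X]) ^ n)).sum).coeff k = S.count k := by
  induction S using Multiset.induction with
  | empty => simp
  | cons a s ih =>
    rw [Multiset.map_cons, Multiset.sum_cons, coeff_add, ih, coeff_X_pow,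
      Multiset.count_cons]
    split_ifs <;> push_cast <;> omega

private lemma Qsum_inj : Function.Injective
    (fun S : Multiset ℕ => ((S.map (fun n => (X : ℤ[X]) ^ n)).sum)) := by
  intro S T h
  ext k
  have := congrArg (fun p => Polynomial.coeff p k) h
  simp only [Qsum_coeff] at this
  exact_mod_cast this

theorem stmt10 {X : Type*} [Countable X] :
    ∃ (f : X → ℝ) (Z : Set ℝ), MeasureTheory.volume Z = 0 ∧
      ∀ ε : ℝ, ε ∉ Z →
        Function.Injective (fun cM : X × Multiset X => ε * f cM.1 + ((cM.2.map f).sum)) := by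
  obtain ⟨e, he⟩ := Countable.exists_injective_nat X
  set L : ℝ := liouvilleNumber 3 with hL
  have htr : Transcendental ℤ L := transcendental_liouvilleNumber (by norm_num)
  set f : X → ℝ := fun x => L ^ e x with hf
  set Q : Multiset X → ℤ[X] := fun M =>
    ((M.map e).map (fun n => (Polynomial.X : ℤ[X]) ^ n)).sum with hQ
  set S : Multiset X → ℝ := fun M => (M.map f).sum with hS
  have hSQ : ∀ M : Multiset X, S M = Polynomial.aeval L (Q M) := by
    intro M
    rw [hS, hQ]
    simp only [map_multiset_sum, Multiset.map_map, Function.comp]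
    simp [hf]
  have hQinj : Function.Injective Q := by
    intro M N h
    exact Multiset.map_injective he (Qsum_inj h)
  have hSinj : Function.Injective S := by
    intro M N h
    apply hQinj
    have h0 : Polynomial.aeval L (Q M - Q N) = 0 := by
      rw [map_sub, ← hSQ, ← hSQ, h, sub_self]
    exact sub_eq_zero.mp (transcendental_iff.mp htr _ h0)
  have hfinj : Function.Injective f := by
    intro c c' h
    have : S {c} = S {c'} := by simp [hS, h]
    simpa using hSinj this
  classical
  refine ⟨f, ⋃ p : (X × Multiset X) × (X × Multiset X),
      if p.1.1 = p.2.1 then (∅ : Set ℝ)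
      else {(S p.2.2 - S p.1.2) / (f p.1.1 - f p.2.1)}, ?_, ?_⟩
  · apply MeasureTheory.measure_iUnion_null
    intro p
    by_cases h : p.1.1 = p.2.1 <;> simp [h]
  · intro ε hε a b hab
    have hab' : ε * f a.1 + S a.2 = ε * f b.1 + S b.2 := hab
    by_cases h : a.1 = b.1
    · have hfe : f a.1 = f b.1 := by rw [h]
      have hM : S a.2 = S b.2 := by
        rw [hfe] at hab'
        linarith
      exact Prod.ext h (hSinj hM)
    · exfalso
      apply hε
      refine Set.mem_iUnion.mpr ⟨(a, b), ?_⟩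
      simp only [h, if_false, Set.mem_singleton_iff]
      have hfne : f a.1 - f b.1 ≠ 0 := sub_ne_zero.mpr (fun hc => h (hfinj hc))
      rw [eq_div_iff hfne, mul_sub]
      linarith
end
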